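/- Let q be a prime power and β ∈ GF(q²)\GF(q). For polynomials f₁, f₂ over GF(q), define F₃(z) = (β+1)·f₁((β^q z − β z^q)/(β^q − β)) + β·f₂((z^q − z)/(β^q − β)). Then F₃ is a permutation of GF(q²) if and only if both f₁ and f₂ are permutation polynomials of GF(q). -/

import Mathlib

open Polynomial

/-- the third recursive construction. -/
theorem stmt_13 {F E : Type*} [Field F] [Fintype F] [Field E] [Algebra F E]
    (hdim : Module.finrank F E = 2)
    (β : E) (hβ : β ∉ Set.range (algebraMap F E))
    (f₁ f₂ : Polynomial F) :
    Function.Bijective (fun z : E =>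
      (β + 1) * aeval ((β ^ Fintype.card F * z - β * z ^ Fintype.card F) /
          (β ^ Fintype.card F - β)) f₁ +
        β * aeval ((z ^ Fintype.card F - z) / (β ^ Fintype.card F - β)) f₂)
      ↔ (Function.Bijective (fun x : F => f₁.eval x) ∧
          Function.Bijective (fun x : F => f₂.eval x)) := by
  classical
  set q := Fintype.card F with hq
  have hq1 : 1 < q := Fintype.one_lt_card
  have : FiniteDimensional F E := Module.finite_of_finrank_pos (by omega)
  haveI : Finite E := Module.finite_of_finite F
  letI : Fintype E := Fintype.ofFinite E
  have hinj : Function.Injective (algebraMap F E) := (algebraMap F E).injective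
  set a : F → E := fun x => algebraMap F E x with ha
  -- characteristic facts
  obtain ⟨p, hpc⟩ := CharP.exists F
  haveI : CharP F p := hpc
  obtain ⟨n, hp, hcard⟩ := FiniteField.card F p
  rw [← hq] at hcard
  haveI : Fact p.Prime := ⟨hp⟩
  haveI : CharP E p := charP_of_injective_algebraMap hinj p
  -- elements of the base field are Frobenius-fixed
  have haq : ∀ x : F, a x ^ q = a x := by
    intro x
    rw [ha, ← map_pow, FiniteField.pow_card]
  -- Frobenius on x + β y
  have key : ∀ x y : F, (a x + β * a y) ^ q = a x + β ^ q * a y := by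
    intro x y
    rw [hcard, add_pow_char_pow, mul_pow, ← hcard, haq, haq]
  -- β is not Frobenius-fixed
  have hβq : β ^ q ≠ β := by
    intro h
    set P : E[X] := X ^ q - X with hP
    have hdeg : P.natDegree = q := by
      rw [hP, natDegree_sub_eq_left_of_natDegree_lt]
      · simp [natDegree_X_pow]
      · simp [natDegree_X, natDegree_X_pow]; omega
    have hP0 : P ≠ 0 := by
      intro h0
      rw [h0, natDegree_zero] at hdeg
      omega
    set s : Finset E := insert β (Finset.univ.image a) with hs
    have hβnotmem : β ∉ Finset.univ.image a := by
      intro hmem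
      obtain ⟨x, -, hx⟩ := Finset.mem_image.mp hmem
      exact hβ ⟨x, hx⟩
    have hscard : s.card = q + 1 := by
      rw [hs, Finset.card_insert_of_notMem hβnotmem,
        Finset.card_image_of_injective _ hinj, Finset.card_univ]
    have hsub : s ⊆ P.roots.toFinset := by
      intro x hx
      rw [Multiset.mem_toFinset, mem_roots hP0]
      have hxq : x ^ q = x := by
        rcases Finset.mem_insert.mp hx with rfl | hx
        · exact h
        · obtain ⟨y, -, rfl⟩ := Finset.mem_image.mp hx
          exact haq y
      simp [hP, IsRoot, hxq]
    have := (Finset.card_le_card hsub).trans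
      ((P.roots.toFinset_card_le).trans (P.card_roots'.trans hdeg.le))
    omega
  have hD : β ^ q - β ≠ 0 := sub_ne_zero.mpr hβq
  -- the linear bijection (x, y) ↦ x + β y
  set L : F × F → E := fun w => a w.1 + β * a w.2 with hL
  have hLinj : Function.Injective L := by
    rintro ⟨x₁, y₁⟩ ⟨x₂, y₂⟩ hxy
    simp only [hL] at hxy
    by_cases hy : y₁ = y₂
    · subst hy
      have : a x₁ = a x₂ := by
        have := hxy
        linear_combination this
      have : x₁ = x₂ := hinj this
      simp [this]
    · exfalso
      have hyne : a y₁ - a y₂ ≠ 0 := by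
        rw [ha, ← map_sub]
        exact fun hc => hy (sub_eq_zero.mp (hinj (by simpa using hc)))
      apply hβ
      refine ⟨(x₂ - x₁) / (y₁ - y₂), ?_⟩
      rw [map_div₀, map_sub, map_sub]
      rw [div_eq_iff hyne]
      linear_combination -hxy
  have hLbij : Function.Bijective L := by
    rw [Fintype.bijective_iff_injective_and_card]
    refine ⟨hLinj, ?_⟩
    rw [Fintype.card_prod, Module.card_eq_pow_finrank (K := F) (V := E), hdim]
    ring
  -- computing the two arguments at z = x + β y
  have harg1 : ∀ x y : F,
      (β ^ q * (L (x, y)) - β * (L (x, y)) ^ q) / (β ^ q - β) = a x := by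
    intro x y
    have h1 : β ^ q * (L (x, y)) - β * (L (x, y)) ^ q = (β ^ q - β) * a x := by
      simp only [hL, key x y]
      ring
    rw [h1, mul_div_cancel_left₀ _ hD]
  have harg2 : ∀ x y : F,
      ((L (x, y)) ^ q - L (x, y)) / (β ^ q - β) = a y := by
    intro x y
    have h1 : (L (x, y)) ^ q - L (x, y) = (β ^ q - β) * a y := by
      simp only [hL, key x y]
      ring
    rw [h1, mul_div_cancel_left₀ _ hD]
  -- the conjugated map on F × F
  set G : F × F → F × F := fun w => (f₁.eval w.1, f₁.eval w.1 + f₂.eval w.2) with hG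
  set Fun : E → E := fun z =>
      (β + 1) * aeval ((β ^ q * z - β * z ^ q) / (β ^ q - β)) f₁ +
        β * aeval ((z ^ q - z) / (β ^ q - β)) f₂ with hFun
  have hcomp : Fun ∘ L = L ∘ G := by
    funext w
    obtain ⟨x, y⟩ := w
    simp only [Function.comp_apply, hFun, harg1 x y, harg2 x y]
    simp only [hG, ha, aeval_algebraMap_apply_eq_algebraMap_eval, hL]
    rw [map_add]
    ring
  constructor
  · intro h
    have hGbij : Function.Bijective G := by
      have h1 : Function.Bijective (Fun ∘ L) := h.comp hLbij
      rw [hcomp] at h1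
      exact (Function.Bijective.of_comp_iff' hLbij G).mp h1
    constructor
    · rw [← Finite.injective_iff_bijective]
      intro x₁ x₂ hx
      have := hGbij.injective (a₁ := (x₁, 0)) (a₂ := (x₂, 0)) (by simp [hG, hx])
      exact (Prod.ext_iff.mp this).1
    · rw [← Finite.injective_iff_bijective]
      intro y₁ y₂ hy
      have := hGbij.injective (a₁ := (0, y₁)) (a₂ := (0, y₂)) (by simp [hG, hy])
      simpa using (Prod.ext_iff.mp this).2
  · rintro ⟨h1, h2⟩
    have hGbij : Function.Bijective G := by
      rw [← Finite.injective_iff_bijective]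
      rintro ⟨x₁, y₁⟩ ⟨x₂, y₂⟩ hxy
      simp only [hG, Prod.mk.injEq] at hxy
      obtain ⟨hx, hy⟩ := hxy
      have hx' : x₁ = x₂ := h1.injective hx
      have hy' : y₁ = y₂ := h2.injective (by rw [hx] at hy; exact add_left_cancel hy)
      simp [hx', hy']
    have : Function.Bijective (L ∘ G) := hLbij.comp hGbij
    rw [← hcomp] at this
    exact (Function.Bijective.of_comp_iff Fun hLbij).mp this
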